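/- arXiv:1302.4116 — 5 statements merged into one kernel-verified Lean document; each statement's English description precedes it below -/
import Mathlib

section
/- Let φ : 𝔻 → 𝔻 be holomorphic and T = C_φ the composition operator on ℓ². Let z_1, …, z_n be distinct points of 𝔻 such that φ(z_1), …, φ(z_n) are also distinct. Suppose K > 0 satisfies ∑_{j=1}^n (1 − |z_j|²)|f_a(z_j)|² ≤ K·‖a‖²_{ℓ²} for every a ∈ ℓ², and suppose M > 0 is such that for every (w_1,…,w_n) ∈ ℂⁿ there exists a ∈ ℓ² with f_a(φ(z_j)) = w_j for all j and ‖a‖²_{ℓ²} ≤ M²·∑_{j=1}^n |w_j|²(1 − |φ(z_j)|²). Then a_n(T) ≥ M^{−1}·K^{−1/2}·min_{1 ≤ j ≤ n} ((1 − |z_j|²)/(1 − |φ(z_j)|²))^{1/2}. -/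
open Complex MeasureTheory Filter Set

noncomputable section

abbrev H2 : Type := lp (fun _ : ℕ => ℂ) 2

noncomputable def fa (a : H2) (z : ℂ) : ℂ := ∑' k : ℕ, a k * z ^ k

noncomputable def approxNum (T : H2 →L[ℂ] H2) (n : ℕ) : ℝ :=
  sInf {c : ℝ | ∃ R : H2 →L[ℂ] H2,
    FiniteDimensional ℂ (LinearMap.range R.toLinearMap) ∧
    Module.finrank ℂ (LinearMap.range R.toLinearMap) ≤ n - 1 ∧ c = ‖T - R‖}

lemma fa_summable (a : H2) {ζ : ℂ} (hζ : ‖ζ‖ < 1) :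
    Summable fun k : ℕ => a k * ζ ^ k := by
  apply Summable.of_norm
  apply Summable.of_nonneg_of_le (fun k => norm_nonneg _) (fun k => ?_)
    ((summable_geometric_of_lt_one (norm_nonneg ζ) hζ).mul_left ‖a‖)
  rw [norm_mul, norm_pow]
  exact mul_le_mul_of_nonneg_right (lp.norm_apply_le_norm two_ne_zero a k) (by positivity)

lemma fa_norm_le (a : H2) {ζ : ℂ} (hζ : ‖ζ‖ < 1) : ‖fa a ζ‖ ≤ (1 - ‖ζ‖)⁻¹ * ‖a‖ := by
  have hsum : Summable fun k : ℕ => ‖a‖ * ‖ζ‖ ^ k :=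
    (summable_geometric_of_lt_one (norm_nonneg ζ) hζ).mul_left ‖a‖
  have h1 : Summable fun k : ℕ => ‖a k * ζ ^ k‖ := by
    apply Summable.of_nonneg_of_le (fun k => norm_nonneg _) (fun k => ?_) hsum
    rw [norm_mul, norm_pow]
    exact mul_le_mul_of_nonneg_right (lp.norm_apply_le_norm two_ne_zero a k) (by positivity)
  calc ‖fa a ζ‖ ≤ ∑' k : ℕ, ‖a k * ζ ^ k‖ := norm_tsum_le_tsum_norm h1
    _ ≤ ∑' k : ℕ, ‖a‖ * ‖ζ‖ ^ k := by
        apply Summable.tsum_le_tsum _ h1 hsum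
        intro k
        rw [norm_mul, norm_pow]
        exact mul_le_mul_of_nonneg_right (lp.norm_apply_le_norm two_ne_zero a k) (by positivity)
    _ = ‖a‖ * (1 - ‖ζ‖)⁻¹ := by
        rw [tsum_mul_left, tsum_geometric_of_lt_one (norm_nonneg ζ) hζ]
    _ = (1 - ‖ζ‖)⁻¹ * ‖a‖ := mul_comm _ _

noncomputable def evalCLM (ζ : ℂ) (hζ : ‖ζ‖ < 1) : H2 →L[ℂ] ℂ :=
  LinearMap.mkContinuous
    { toFun := fun a => fa a ζ
      map_add' := by
        intro a b
        simp only [fa]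
        rw [← Summable.tsum_add (fa_summable a hζ) (fa_summable b hζ)]
        congr 1; funext k
        rw [lp.coeFn_add]; simp [add_mul]
      map_smul' := by
        intro c a
        simp only [fa, RingHom.id_apply, smul_eq_mul]
        rw [← tsum_mul_left]
        congr 1; funext k
        rw [lp.coeFn_smul]; simp [mul_assoc] }
    ((1 - ‖ζ‖)⁻¹) (fun a => fa_norm_le a hζ)

lemma evalCLM_apply (ζ : ℂ) (hζ : ‖ζ‖ < 1) (a : H2) : evalCLM ζ hζ a = fa a ζ := rfl

set_option maxHeartbeats 1000000 in
theorem stmt5 (φ : ℂ → ℂ)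
    (hφ_diff : DifferentiableOn ℂ φ (Metric.ball 0 1))
    (hφ_maps : Set.MapsTo φ (Metric.ball 0 1) (Metric.ball 0 1))
    (T : H2 →L[ℂ] H2)
    (hT : ∀ (a : H2) (z : ℂ), ‖z‖ < 1 → fa (T a) z = fa a (φ z))
    (n : ℕ) (hn : 1 ≤ n)
    (z : Fin n → ℂ) (hz : ∀ j, ‖z j‖ < 1)
    (hz_inj : Function.Injective z)
    (hφz_inj : Function.Injective (fun j => φ (z j)))
    (K : ℝ) (hK : 0 < K)
    (hCarleson : ∀ a : H2,
      ∑ j : Fin n, (1 - ‖z j‖ ^ 2) * ‖fa a (z j)‖ ^ 2 ≤ K * ‖a‖ ^ 2)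
    (M : ℝ) (hM : 0 < M)
    (hInterp : ∀ w : Fin n → ℂ, ∃ a : H2,
      (∀ j, fa a (φ (z j)) = w j) ∧
      ‖a‖ ^ 2 ≤ M ^ 2 * ∑ j : Fin n, ‖w j‖ ^ 2 * (1 - ‖φ (z j)‖ ^ 2)) :
    approxNum T n ≥
      M⁻¹ * (Real.sqrt K)⁻¹ *
        Real.sqrt (⨅ j : Fin n, (1 - ‖z j‖ ^ 2) / (1 - ‖φ (z j)‖ ^ 2)) := by
  classical
  haveI : Nonempty (Fin n) := ⟨⟨0, hn⟩⟩
  have hφz : ∀ j, ‖φ (z j)‖ < 1 := by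
    intro j
    have h1 : z j ∈ Metric.ball (0:ℂ) 1 := by
      simpa [Metric.mem_ball, dist_zero_right] using hz j
    simpa [Metric.mem_ball, dist_zero_right] using hφ_maps h1
  have h1z : ∀ j, (0:ℝ) < 1 - ‖z j‖ ^ 2 := fun j => by
    nlinarith [hz j, norm_nonneg (z j)]
  have h1φ : ∀ j, (0:ℝ) < 1 - ‖φ (z j)‖ ^ 2 := fun j => by
    nlinarith [hφz j, norm_nonneg (φ (z j))]
  set μ := ⨅ j : Fin n, (1 - ‖z j‖ ^ 2) / (1 - ‖φ (z j)‖ ^ 2) with hμdef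
  have hbdd : BddBelow (Set.range fun j : Fin n =>
      (1 - ‖z j‖ ^ 2) / (1 - ‖φ (z j)‖ ^ 2)) := (Set.finite_range _).bddBelow
  have hμpos : (0:ℝ) < μ := by
    obtain ⟨j0, _, hj0⟩ := Finset.exists_min_image Finset.univ
      (fun j => (1 - ‖z j‖ ^ 2) / (1 - ‖φ (z j)‖ ^ 2)) ⟨⟨0, hn⟩, Finset.mem_univ _⟩
    exact lt_of_lt_of_le (div_pos (h1z j0) (h1φ j0))
      (le_ciInf fun i => hj0 i (Finset.mem_univ i))
  have hμle : ∀ j, μ ≤ (1 - ‖z j‖ ^ 2) / (1 - ‖φ (z j)‖ ^ 2) := fun j => ciInf_le hbdd j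
  set c := M⁻¹ * (Real.sqrt K)⁻¹ * Real.sqrt μ with hcdef
  have hc0 : (0:ℝ) ≤ c := by positivity
  set L : H2 →L[ℂ] (Fin n → ℂ) :=
    ContinuousLinearMap.pi (fun j => evalCLM (φ (z j)) (hφz j)) with hLdef
  have hLapp : ∀ (a : H2) (j : Fin n), L a j = fa a (φ (z j)) := fun a j => rfl
  set Kr := LinearMap.ker (L : H2 →ₗ[ℂ] (Fin n → ℂ)) with hKrdef
  haveI : CompleteSpace Kr := (ContinuousLinearMap.isClosed_ker L).completeSpace_coe
  -- Key bound: minimal norm property of elements of Krᗮ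
  have hA : ∀ x : H2, x ∈ Krᗮ →
      ‖x‖ ^ 2 ≤ M ^ 2 * ∑ j : Fin n, ‖L x j‖ ^ 2 * (1 - ‖φ (z j)‖ ^ 2) := by
    intro x hx
    obtain ⟨a, ha1, ha2⟩ := hInterp (fun j => L x j)
    have hker : a - x ∈ Kr := by
      rw [hKrdef, LinearMap.mem_ker]
      funext j
      have : L (a - x) j = L a j - L x j := by rw [map_sub]; rfl
      rw [ContinuousLinearMap.coe_coe, this, hLapp, ha1 j, sub_self]; rfl
    have hinner : (inner ℂ (a - x) x : ℂ) = 0 :=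
      (Submodule.mem_orthogonal Kr x).mp hx _ hker
    have hpyth : ‖x‖ ^ 2 ≤ ‖a‖ ^ 2 := by
      have hsplit : ‖(a - x) + x‖ ^ 2
          = ‖a - x‖ ^ 2 + 2 * Complex.re (inner ℂ (a - x) x : ℂ) + ‖x‖ ^ 2 :=
        norm_add_sq (𝕜 := ℂ) _ _
      rw [sub_add_cancel, hinner] at hsplit
      simp at hsplit
      nlinarith [sq_nonneg ‖a - x‖]
    exact hpyth.trans ha2
  -- Surjectivity of L restricted to Krᗮ
  have hsurj : ∀ w : Fin n → ℂ, ∃ x : H2, x ∈ Krᗮ ∧ L x = w := by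
    intro w
    obtain ⟨a, ha1, _⟩ := hInterp w
    obtain ⟨u, hu, v, hv, hdecomp⟩ := Kr.exists_add_mem_mem_orthogonal a
    refine ⟨v, hv, ?_⟩
    have hLa : L a = w := funext fun j => by rw [hLapp]; exact ha1 j
    have hLu : L u = 0 := LinearMap.mem_ker.mp hu
    rw [hdecomp, map_add, hLu, zero_add] at hLa
    exact hLa
  set L' : ↥Krᗮ →ₗ[ℂ] (Fin n → ℂ) := L.toLinearMap.comp (Krᗮ : Submodule ℂ H2).subtype
    with hL'def
  have hL'inj : Function.Injective L' := by
    rw [← LinearMap.ker_eq_bot, Submodule.eq_bot_iff]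
    rintro ⟨x, hx⟩ hxker
    have hx0 : L x = 0 := by
      have h' := LinearMap.mem_ker.mp hxker
      simpa [hL'def, LinearMap.comp_apply] using h'
    have hxKr : x ∈ Kr := LinearMap.mem_ker.mpr hx0
    have : (inner ℂ x x : ℂ) = 0 := (Submodule.mem_orthogonal Kr x).mp hx x hxKr
    exact Subtype.ext (inner_self_eq_zero.mp this)
  have hL'surj : Function.Surjective L' := by
    intro w
    obtain ⟨x, hx, hLx⟩ := hsurj w
    exact ⟨⟨x, hx⟩, hLx⟩
  let e : ↥Krᗮ ≃ₗ[ℂ] (Fin n → ℂ) := LinearEquiv.ofBijective L' ⟨hL'inj, hL'surj⟩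
  haveI : FiniteDimensional ℂ ↥Krᗮ := Module.Finite.equiv e.symm
  have hdim : Module.finrank ℂ ↥Krᗮ = n := by
    rw [e.finrank_eq, Module.finrank_fin_fun]
  rw [ge_iff_le]
  apply le_csInf
  · refine ⟨‖T - 0‖, 0, ?_, ?_, rfl⟩
    · rw [show ((0 : H2 →L[ℂ] H2).toLinearMap) = 0 from rfl, LinearMap.range_zero]
      infer_instance
    · rw [show ((0 : H2 →L[ℂ] H2).toLinearMap) = 0 from rfl, LinearMap.range_zero]
      simp
  · rintro b ⟨R, hRfin, hRrank, rfl⟩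
    -- find a nonzero x in Krᗮ killed by R
    have hex : ∃ x : H2, x ∈ Krᗮ ∧ x ≠ 0 ∧ R x = 0 := by
      by_contra hcon
      push_neg at hcon
      set f : ↥Krᗮ →ₗ[ℂ] H2 := R.toLinearMap.comp (Krᗮ : Submodule ℂ H2).subtype with hfdef
      have hfinj : Function.Injective f := by
        rw [← LinearMap.ker_eq_bot, Submodule.eq_bot_iff]
        rintro ⟨x, hx⟩ hxk
        have hRx : R x = 0 := by
          have h' := LinearMap.mem_ker.mp hxk
          simpa [hfdef, LinearMap.comp_apply] using h'
        by_contra hne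
        exact hcon x hx (fun h0 => hne (Subtype.ext h0)) hRx
      have h1 : Module.finrank ℂ (LinearMap.range f) = Module.finrank ℂ ↥Krᗮ :=
        LinearMap.finrank_range_of_inj hfinj
      have hle : LinearMap.range f ≤ LinearMap.range R.toLinearMap := by
        rw [hfdef]
        exact LinearMap.range_comp_le_range _ _
      have h2 : Module.finrank ℂ (LinearMap.range f)
          ≤ Module.finrank ℂ (LinearMap.range R.toLinearMap) :=
        Submodule.finrank_mono hle
      omega
    obtain ⟨x, hx, hx0, hRx⟩ := hex
    -- Carleson estimate for T x
    have hCar := hCarleson (T x)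
    have hTx : ∀ j, fa (T x) (z j) = L x j := fun j => by
      rw [hT x (z j) (hz j), hLapp]
    rw [show (fun j : Fin n => (1 - ‖z j‖ ^ 2) * ‖fa (T x) (z j)‖ ^ 2)
        = fun j => (1 - ‖z j‖ ^ 2) * ‖L x j‖ ^ 2 from funext fun j => by rw [hTx j]] at hCar
    -- lower bound the weighted sum
    have hsum1 : μ * ∑ j : Fin n, ‖L x j‖ ^ 2 * (1 - ‖φ (z j)‖ ^ 2)
        ≤ ∑ j : Fin n, (1 - ‖z j‖ ^ 2) * ‖L x j‖ ^ 2 := by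
      rw [Finset.mul_sum]
      apply Finset.sum_le_sum
      intro j _
      have h := hμle j
      have hφj := h1φ j
      have hnn : (0:ℝ) ≤ ‖L x j‖ ^ 2 := sq_nonneg _
      have hmu : μ * (1 - ‖φ (z j)‖ ^ 2) ≤ 1 - ‖z j‖ ^ 2 :=
        (le_div_iff₀ hφj).mp h
      nlinarith
    have hxbound := hA x hx
    -- combine
    have hkey : μ * ‖x‖ ^ 2 ≤ M ^ 2 * K * ‖T x‖ ^ 2 := by
      have h3 : μ * ‖x‖ ^ 2 ≤ μ * (M ^ 2 * ∑ j : Fin n, ‖L x j‖ ^ 2 * (1 - ‖φ (z j)‖ ^ 2)) :=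
        mul_le_mul_of_nonneg_left hxbound hμpos.le
      calc μ * ‖x‖ ^ 2
          ≤ M ^ 2 * (μ * ∑ j : Fin n, ‖L x j‖ ^ 2 * (1 - ‖φ (z j)‖ ^ 2)) := by
            rw [← mul_assoc, mul_comm (M ^ 2) μ, mul_assoc]
            exact h3
        _ ≤ M ^ 2 * ∑ j : Fin n, (1 - ‖z j‖ ^ 2) * ‖L x j‖ ^ 2 :=
            mul_le_mul_of_nonneg_left hsum1 (by positivity)
        _ ≤ M ^ 2 * (K * ‖T x‖ ^ 2) := mul_le_mul_of_nonneg_left hCar (by positivity)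
        _ = M ^ 2 * K * ‖T x‖ ^ 2 := by ring
    -- deduce c * ‖x‖ ≤ ‖T x‖
    have hcx : c * ‖x‖ ≤ ‖T x‖ := by
      have hsq : (c * ‖x‖) ^ 2 ≤ ‖T x‖ ^ 2 := by
        have hc2 : c ^ 2 = μ / (M ^ 2 * K) := by
          rw [hcdef, mul_pow, mul_pow, Real.sq_sqrt hμpos.le, ← Real.sqrt_inv,
            Real.sq_sqrt (by positivity : (0:ℝ) ≤ K⁻¹)]
          field_simp
        rw [mul_pow, hc2, div_mul_eq_mul_div, div_le_iff₀ (by positivity)]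
        nlinarith [hkey]
      calc c * ‖x‖ = Real.sqrt ((c * ‖x‖) ^ 2) := by
            rw [Real.sqrt_sq (by positivity)]
        _ ≤ Real.sqrt (‖T x‖ ^ 2) := Real.sqrt_le_sqrt hsq
        _ = ‖T x‖ := Real.sqrt_sq (norm_nonneg _)
    have hTR : (T - R) x = T x := by
      rw [ContinuousLinearMap.sub_apply, hRx, sub_zero]
    have hxpos : (0:ℝ) < ‖x‖ := norm_pos_iff.mpr hx0
    have := ((T - R).le_opNorm x)
    rw [hTR] at this
    have hfinal : c * ‖x‖ ≤ ‖T - R‖ * ‖x‖ := le_trans hcx this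
    exact le_of_mul_le_mul_right (by linarith) hxpos

end
end

section
/- Let H be a complex Hilbert space, T : H → H a bounded linear operator, and n ≥ 1 an integer. Then a_n(T) equals the n-th Bernstein number of T, namely a_n(T) = sup_{E} inf{ ‖Tx‖ : x ∈ E, ‖x‖ = 1 }, where the supremum is taken over all subspaces E of H of dimension exactly n. -/
open Set ContinuousLinearMap RCLike

local notation "⟪" x ", " y "⟫" => @inner ℂ _ _ x y

section aux

variable {H : Type*} [NormedAddCommGroup H] [InnerProductSpace ℂ H] [CompleteSpace H]

lemma aux_inner_mono {W₁ W₂ : H →L[ℂ] H} (h : W₁ ≤ W₂) (z : H) :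
    re ⟪W₁ z, z⟫ ≤ re ⟪W₂ z, z⟫ := by
  have h0 := ((le_def W₁ W₂).mp h).inner_nonneg_left z
  rw [sub_apply, inner_sub_left] at h0
  have h1 := (RCLike.nonneg_iff.mp h0).1
  rw [map_sub] at h1
  linarith

lemma aux_symm {W : H →L[ℂ] H} (hW : IsSelfAdjoint W) (x y : H) :
    ⟪W x, y⟫ = ⟪x, W y⟫ :=
  (isSelfAdjoint_iff_isSymmetric.mp hW) x y

end aux

set_option maxHeartbeats 2000000 in
theorem stmt8 (H : Type*) [NormedAddCommGroup H] [InnerProductSpace ℂ H]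
    [CompleteSpace H] (T : H →L[ℂ] H) (n : ℕ) (hn : 1 ≤ n) :
    sInf {c : ℝ | ∃ R : H →L[ℂ] H,
        FiniteDimensional ℂ (LinearMap.range R.toLinearMap) ∧
        Module.finrank ℂ (LinearMap.range R.toLinearMap) ≤ n - 1 ∧ c = ‖T - R‖}
      =
    sSup {c : ℝ | ∃ E : Submodule ℂ H, Module.finrank ℂ E = n ∧
        c = sInf {d : ℝ | ∃ x : H, x ∈ E ∧ ‖x‖ = 1 ∧ d = ‖T x‖}} := by
  set 𝒜 := {c : ℝ | ∃ R : H →L[ℂ] H,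
      FiniteDimensional ℂ (LinearMap.range R.toLinearMap) ∧
      Module.finrank ℂ (LinearMap.range R.toLinearMap) ≤ n - 1 ∧ c = ‖T - R‖} with h𝒜
  set ℬ := {c : ℝ | ∃ E : Submodule ℂ H, Module.finrank ℂ E = n ∧
      c = sInf {d : ℝ | ∃ x : H, x ∈ E ∧ ‖x‖ = 1 ∧ d = ‖T x‖}} with hℬ
  -- basic facts
  have hAne : 𝒜.Nonempty := by
    have hr : LinearMap.range ((0 : H →L[ℂ] H) : H →ₗ[ℂ] H) = ⊥ := by
      simp
    refine ⟨‖T - 0‖, 0, ?_, ?_, rfl⟩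
    · rw [hr]; infer_instance
    · rw [hr, finrank_bot]; exact Nat.zero_le _
  have hAbd : BddBelow 𝒜 := ⟨0, by rintro c ⟨R, -, -, rfl⟩; exact norm_nonneg _⟩
  -- every E with finrank n contains a unit vector
  have unitvec : ∀ E : Submodule ℂ H, Module.finrank ℂ E = n → ∃ x : H, x ∈ E ∧ ‖x‖ = 1 := by
    intro E hE
    have hEbot : E ≠ ⊥ := by
      intro h; rw [h, finrank_bot] at hE; omega
    obtain ⟨x, hxE, hx0⟩ := Submodule.exists_mem_ne_zero_of_ne_bot hEbot
    exact ⟨(‖x‖⁻¹ : ℂ) • x, E.smul_mem _ hxE, norm_smul_inv_norm hx0⟩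
  have hBbd : BddAbove ℬ := by
    refine ⟨‖T‖, ?_⟩
    rintro c ⟨E, hE, rfl⟩
    obtain ⟨x, hxE, hx1⟩ := unitvec E hE
    refine csInf_le_of_le ⟨0, ?_⟩ ⟨x, hxE, hx1, rfl⟩ ?_
    · rintro d ⟨y, -, -, rfl⟩; exact norm_nonneg _
    · calc ‖T x‖ ≤ ‖T‖ * ‖x‖ := T.le_opNorm x
        _ = ‖T‖ := by rw [hx1, mul_one]
  have hAnonneg : ∀ c ∈ 𝒜, (0:ℝ) ≤ c := by rintro c ⟨R, -, -, rfl⟩; exact norm_nonneg _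
  -- easy direction: every element of ℬ ≤ every element of 𝒜
  have key_le : ∀ e ∈ ℬ, ∀ a ∈ 𝒜, e ≤ a := by
    rintro e ⟨E, hE, rfl⟩ a ⟨R, hfin, hrk, rfl⟩
    haveI : FiniteDimensional ℂ E := FiniteDimensional.of_finrank_pos (by omega)
    -- find nonzero x ∈ E with R x = 0
    set φ : E →ₗ[ℂ] LinearMap.range R.toLinearMap :=
      (R.toLinearMap.domRestrict E).codRestrict (LinearMap.range R.toLinearMap)
        (fun x => LinearMap.mem_range_self _ _) with hφ
    have hker : LinearMap.ker φ ≠ ⊥ := by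
      intro h
      have hinj : Function.Injective φ := LinearMap.ker_eq_bot.mp h
      have := LinearMap.finrank_le_finrank_of_injective hinj
      rw [hE] at this
      omega
    obtain ⟨x, hxker, hx0⟩ := Submodule.exists_mem_ne_zero_of_ne_bot hker
    have hRx : R (x : H) = 0 := by
      have : φ x = 0 := hxker
      have := congrArg (Subtype.val) this
      simpa [hφ, LinearMap.codRestrict, LinearMap.domRestrict] using this
    set u : H := (‖(x:H)‖⁻¹ : ℂ) • (x : H) with hu
    have hxne : (x : H) ≠ 0 := fun h => hx0 (Subtype.ext h)
    have huE : u ∈ E := E.smul_mem _ x.2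
    have hu1 : ‖u‖ = 1 := norm_smul_inv_norm hxne
    have hRu : R u = 0 := by rw [hu, map_smul, hRx, smul_zero]
    refine csInf_le_of_le ⟨0, ?_⟩ ⟨u, huE, hu1, rfl⟩ ?_
    · rintro d ⟨y, -, -, rfl⟩; exact norm_nonneg _
    · calc ‖T u‖ = ‖(T - R) u‖ := by rw [sub_apply, hRu, sub_zero]
        _ ≤ ‖T - R‖ * ‖u‖ := (T - R).le_opNorm u
        _ = ‖T - R‖ := by rw [hu1, mul_one]
  have dir1 : sSup ℬ ≤ sInf 𝒜 := by
    rcases ℬ.eq_empty_or_nonempty with hB | hBne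
    · rw [hB, Real.sSup_empty]
      exact le_csInf hAne hAnonneg
    · exact csSup_le hBne fun e he => le_csInf hAne fun a ha => key_le e he a ha
  -- hard direction
  have hb0 : 0 ≤ sSup ℬ := by
    rcases ℬ.eq_empty_or_nonempty with hB | ⟨e, he⟩
    · rw [hB, Real.sSup_empty]
    · refine le_trans ?_ (le_csSup hBbd he)
      obtain ⟨E, hE, rfl⟩ := he
      obtain ⟨x, hxE, hx1⟩ := unitvec E hE
      refine le_csInf ⟨‖T x‖, x, hxE, hx1, rfl⟩ ?_
      rintro d ⟨y, -, -, rfl⟩; exact norm_nonneg _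
  have dir2 : sInf 𝒜 ≤ sSup ℬ := by
    refine le_of_forall_pos_le_add fun ε hε => ?_
    set b := sSup ℬ
    set uu : ℝ := b + ε / 2 with huu
    set vv : ℝ := b + ε with hvv
    have hu0 : 0 < uu := by positivity
    have hv0 : 0 < vv := by positivity
    have huv : uu < vv := by simp [huu, hvv]; linarith
    -- the operator S = T* T
    set S : H →L[ℂ] H := adjoint T * T with hS
    have hSsa : IsSelfAdjoint S := by
      rw [hS, ← star_eq_adjoint]; exact IsSelfAdjoint.star_mul_self T
    have keyS : ∀ x : H, re ⟪S x, x⟫ = ‖T x‖ ^ 2 := by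
      intro x
      rw [hS, ContinuousLinearMap.mul_apply, adjoint_inner_left, inner_self_eq_norm_sq]
    clear_value S
    -- the cut-off function
    set h : ℝ → ℝ := fun s => min 1 (max 0 ((vv^2 - s)/(vv^2 - uu^2))) with hh
    have hden : 0 < vv^2 - uu^2 := by nlinarith
    have hcont : Continuous h := by
      apply Continuous.min continuous_const
      apply Continuous.max continuous_const
      exact (continuous_const.sub continuous_id).div_const _
    have h_one : ∀ s : ℝ, s ≤ uu^2 → h s = 1 := by
      intro s hs
      have : (1:ℝ) ≤ (vv^2 - s)/(vv^2 - uu^2) := by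
        rw [le_div_iff₀ hden]; linarith
      simp only [hh]
      rw [max_eq_right (by linarith), min_eq_left this]
    have h_zero : ∀ s : ℝ, vv^2 ≤ s → h s = 0 := by
      intro s hs
      have : (vv^2 - s)/(vv^2 - uu^2) ≤ 0 := by
        apply div_nonpos_of_nonpos_of_nonneg <;> linarith
      simp only [hh]
      rw [max_eq_left this, min_eq_right zero_le_one]
    have h_nonneg : ∀ s : ℝ, 0 ≤ h s := fun s =>
      le_min zero_le_one (le_max_left _ _)
    -- pointwise inequalities
    have ineq1 : ∀ s : ℝ, h s * (s * h s) ≤ vv^2 * (h s * h s) := by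
      intro s
      rcases le_or_gt s (vv^2) with hs | hs
      · nlinarith [mul_nonneg (sub_nonneg.2 hs) (sq_nonneg (h s))]
      · rw [h_zero s hs.le]; ring_nf; exact le_rfl
    have ineq2 : ∀ s : ℝ, uu^2 * ((1 - h s) * (1 - h s)) ≤ (1 - h s) * (s * (1 - h s)) := by
      intro s
      rcases lt_or_ge s (uu^2) with hs | hs
      · rw [h_one s hs.le]; ring_nf; exact le_rfl
      · nlinarith [mul_nonneg (sub_nonneg.2 hs) (sq_nonneg (1 - h s))]
    -- cfc operators
    set A : H →L[ℂ] H := cfc h S with hA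
    have hAsa : IsSelfAdjoint A := cfc_predicate _ _
    set B : H →L[ℂ] H := cfc (fun s => 1 - h s) S with hB
    have hBsa : IsSelfAdjoint B := cfc_predicate _ _
    clear_value A B
    have hB1A : B = 1 - A := by
      rw [hB, cfc_sub (fun _ => (1:ℝ)) h S (by fun_prop) (by fun_prop), cfc_const 1 S hSsa,
        map_one, hA]
    have opA1 : A * S * A = cfc (fun s => h s * (s * h s)) S := by
      rw [cfc_mul h (fun s => s * h s) S (by fun_prop) (by fun_prop),
        cfc_mul (fun s => s) h S (by fun_prop) (by fun_prop), cfc_id' ℝ S hSsa, hA, mul_assoc]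
    have opA2 : vv^2 • (A * A) = cfc (fun s => vv^2 * (h s * h s)) S := by
      rw [cfc_const_mul (vv^2) (fun s => h s * h s) S (by fun_prop),
        cfc_mul h h S (by fun_prop) (by fun_prop), hA]
    have le1 : A * S * A ≤ vv^2 • (A * A) := by
      rw [opA1, opA2]
      exact cfc_mono (fun s _ => ineq1 s) (by fun_prop) (by fun_prop)
    have opB1 : B * S * B = cfc (fun s => (1 - h s) * (s * (1 - h s))) S := by
      rw [cfc_mul (fun s => 1 - h s) (fun s => s * (1 - h s)) S (by fun_prop) (by fun_prop),
        cfc_mul (fun s => s) (fun s => 1 - h s) S (by fun_prop) (by fun_prop),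
        cfc_id' ℝ S hSsa, hB, mul_assoc]
    have opB2 : uu^2 • (B * B) = cfc (fun s => uu^2 * ((1 - h s) * (1 - h s))) S := by
      rw [cfc_const_mul (uu^2) (fun s => (1 - h s) * (1 - h s)) S (by fun_prop),
        cfc_mul (fun s => 1 - h s) (fun s => 1 - h s) S (by fun_prop) (by fun_prop), hB]
    have le2 : uu^2 • (B * B) ≤ B * S * B := by
      rw [opB1, opB2]
      exact cfc_mono (fun s _ => ineq2 s) (by fun_prop) (by fun_prop)
    -- pointwise consequences
    have normTA : ∀ z : H, ‖T (A z)‖^2 ≤ vv^2 * ‖A z‖^2 := by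
      intro z
      have e1 : re ⟪(A * S * A) z, z⟫ = ‖T (A z)‖^2 := by
        have hz : (A * S * A) z = A (S (A z)) := by rw [ContinuousLinearMap.mul_apply, ContinuousLinearMap.mul_apply]
        rw [hz, aux_symm hAsa (S (A z)) z, ← keyS (A z)]
      have e2 : re ⟪(vv^2 • (A * A)) z, z⟫ = vv^2 * ‖A z‖^2 := by
        have hz : (vv^2 • (A * A)) z = (vv^2 : ℝ) • (A (A z)) := by rw [smul_apply, ContinuousLinearMap.mul_apply]
        rw [hz, real_smul_eq_coe_smul (K := ℂ), inner_smul_real_left, smul_re,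
          aux_symm hAsa (A z) z, inner_self_eq_norm_sq]
      have := aux_inner_mono le1 z
      rw [e1, e2] at this
      exact this
    have ker_lower : ∀ x : H, A x = 0 → uu^2 * ‖x‖^2 ≤ ‖T x‖^2 := by
      intro x hx
      have hBx : B x = x := by rw [hB1A]; simp [hx]
      have e1 : re ⟪(B * S * B) x, x⟫ = ‖T x‖^2 := by
        have hz : (B * S * B) x = B (S (B x)) := by rw [ContinuousLinearMap.mul_apply, ContinuousLinearMap.mul_apply]
        rw [hz, hBx, aux_symm hBsa (S x) x, hBx, keyS]
      have e2 : re ⟪(uu^2 • (B * B)) x, x⟫ = uu^2 * ‖x‖^2 := by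
        have hz : (uu^2 • (B * B)) x = (uu^2 : ℝ) • (B (B x)) := by rw [smul_apply, ContinuousLinearMap.mul_apply]
        rw [hz, hBx, hBx, real_smul_eq_coe_smul (K := ℂ), inner_smul_real_left, smul_re,
          inner_self_eq_norm_sq]
      have := aux_inner_mono le2 x
      rw [e1, e2] at this
      exact this
    -- bound on the orthocomplement of the kernel of A
    have closed_bound : ∀ y ∈ (LinearMap.ker (A : H →ₗ[ℂ] H))ᗮ, ‖T y‖^2 ≤ vv^2 * ‖y‖^2 := by
      intro y hy
      have hsub : ((LinearMap.range (A : H →ₗ[ℂ] H) : Submodule ℂ H))ᗮ ≤ LinearMap.ker (A : H →ₗ[ℂ] H) := by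
        intro x hx
        have h1 : ⟪A (A x), x⟫ = 0 :=
          ((Submodule.mem_orthogonal _ _).1 hx) _ (LinearMap.mem_range_self _ _)
        rw [aux_symm hAsa (A x) x] at h1
        exact LinearMap.mem_ker.mpr (inner_self_eq_zero.mp h1)
      have h3 : (LinearMap.ker (A : H →ₗ[ℂ] H))ᗮ ≤ ((LinearMap.range (A : H →ₗ[ℂ] H) : Submodule ℂ H))ᗮᗮ :=
        Submodule.orthogonal_le hsub
      rw [Submodule.orthogonal_orthogonal_eq_closure] at h3
      have hy2 : y ∈ closure ((LinearMap.range (A : H →ₗ[ℂ] H) : Submodule ℂ H) : Set H) := by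
        have := h3 hy
        rwa [← Submodule.topologicalClosure_coe]
      have hclosed : IsClosed {w : H | ‖T w‖^2 ≤ vv^2 * ‖w‖^2} := by
        apply isClosed_le
        · fun_prop
        · fun_prop
      refine hclosed.closure_subset_iff.mpr ?_ hy2
      rintro w ⟨z, rfl⟩
      exact normTA z
    -- case analysis on the size of the kernel
    by_cases hbig : (n : Cardinal) ≤ Module.rank ℂ (LinearMap.ker (A : H →ₗ[ℂ] H))
    · exfalso
      obtain ⟨f, hf⟩ := exists_linearIndependent_of_le_rank hbig
      have hg : LinearIndependent ℂ (fun i => ((f i : H))) :=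
        hf.map' (LinearMap.ker (A : H →ₗ[ℂ] H)).subtype (Submodule.ker_subtype _)
      set E := Submodule.span ℂ (Set.range fun i => (f i : H)) with hE
      have hEfr : Module.finrank ℂ E = n := by
        rw [hE, finrank_span_eq_card hg, Fintype.card_fin]
      have hEK : E ≤ LinearMap.ker (A : H →ₗ[ℂ] H) := by
        rw [hE, Submodule.span_le]
        rintro w ⟨i, rfl⟩
        exact (f i).2
      have hmem : sInf {d : ℝ | ∃ x : H, x ∈ E ∧ ‖x‖ = 1 ∧ d = ‖T x‖} ∈ ℬ := ⟨E, hEfr, rfl⟩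
      obtain ⟨x₀, hx₀E, hx₀1⟩ := unitvec E hEfr
      have hlow : uu ≤ sInf {d : ℝ | ∃ x : H, x ∈ E ∧ ‖x‖ = 1 ∧ d = ‖T x‖} := by
        refine le_csInf ⟨‖T x₀‖, x₀, hx₀E, hx₀1, rfl⟩ ?_
        rintro d ⟨x, hxE, hx1, rfl⟩
        have hker := ker_lower x (LinearMap.mem_ker.mp (hEK hxE))
        rw [hx1] at hker
        nlinarith [norm_nonneg (T x), hu0.le]
      have hsup : sInf {d : ℝ | ∃ x : H, x ∈ E ∧ ‖x‖ = 1 ∧ d = ‖T x‖} ≤ b :=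
        le_csSup hBbd hmem
      simp only [huu] at hlow
      linarith [hlow, hsup, hε]
    · push_neg at hbig
      haveI hfinK : FiniteDimensional ℂ (LinearMap.ker (A : H →ₗ[ℂ] H)) := by
        exact Module.rank_lt_aleph0_iff.mp (hbig.trans (Cardinal.nat_lt_aleph0 n))
      have hkr : Module.finrank ℂ (LinearMap.ker (A : H →ₗ[ℂ] H)) ≤ n - 1 := by
        have h1 : (Module.finrank ℂ (LinearMap.ker (A : H →ₗ[ℂ] H)) : Cardinal) < n := by
          rw [Module.finrank_eq_rank]
          exact hbig
        rw [Nat.cast_lt] at h1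
        omega
      set K := LinearMap.ker (A : H →ₗ[ℂ] H) with hK
      set P : H →L[ℂ] K := K.orthogonalProjection with hP
      set R : H →L[ℂ] H := T ∘L (K.subtypeL ∘L P) with hR
      have hRapp : ∀ z : H, R z = T ((P z : H)) := fun z => by rw [hR, comp_apply, comp_apply]; rfl
      have hrange : LinearMap.range (R : H →ₗ[ℂ] H) ≤ K.map (T : H →ₗ[ℂ] H) := by
        rintro w ⟨z, rfl⟩
        exact ⟨(P z : H), (P z).2, rfl⟩
      haveI hfinmap : FiniteDimensional ℂ (K.map (T : H →ₗ[ℂ] H)) := by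
        infer_instance
      haveI hfinrange : FiniteDimensional ℂ (LinearMap.range (R : H →ₗ[ℂ] H)) :=
        Submodule.finiteDimensional_of_le hrange
      have hfr : Module.finrank ℂ (LinearMap.range (R : H →ₗ[ℂ] H)) ≤ n - 1 := by
        refine le_trans (Submodule.finrank_mono hrange) (le_trans ?_ hkr)
        exact Submodule.finrank_map_le _ _
      have hTR : ∀ x : H, ‖(T - R) x‖ ≤ vv * ‖x‖ := by
        intro x
        have hdecomp : (T - R) x = T (x - (P x : H)) := by
          rw [sub_apply, hRapp, map_sub]
        have hyK : x - (P x : H) ∈ Kᗮ := K.sub_starProjection_mem_orthogonal x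
        have hb := closed_bound _ hyK
        have horth : ⟪(P x : H), x - (P x : H)⟫ = 0 :=
          Submodule.inner_right_of_mem_orthogonal (P x).2 hyK
        have hpyth : ‖x‖^2 = ‖(P x : H)‖^2 + ‖x - (P x : H)‖^2 := by
          have hxeq : (P x : H) + (x - (P x : H)) = x := by abel
          have := norm_add_sq_eq_norm_sq_add_norm_sq_of_inner_eq_zero _ _ horth
          rw [hxeq] at this
          nlinarith [this]
        have hnorm : ‖x - (P x : H)‖ ≤ ‖x‖ := by
          nlinarith [norm_nonneg (x - (P x : H)), norm_nonneg x, norm_nonneg ((P x : H))]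
        rw [hdecomp]
        have h2 : ‖T (x - (P x : H))‖ ≤ vv * ‖x - (P x : H)‖ := by
          nlinarith [hb, norm_nonneg (T (x - (P x : H))), mul_nonneg hv0.le (norm_nonneg (x - (P x : H)))]
        calc ‖T (x - (P x : H))‖ ≤ vv * ‖x - (P x : H)‖ := h2
          _ ≤ vv * ‖x‖ := by nlinarith [hv0.le]
      have hTRnorm : ‖T - R‖ ≤ vv := opNorm_le_bound _ hv0.le hTR
      refine le_trans (csInf_le hAbd ⟨R, hfinrange, hfr, rfl⟩) ?_
      simpa [hvv] using hTRnorm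
  linarith [dir1, dir2]
end

section
/- Let z_1, …, z_N be distinct points of 𝔻 and let M > 0 be such that for every (w_1,…,w_N) ∈ ℂ^N there exists a ∈ ℓ² with f_a(z_j) = w_j for all j and ‖a‖²_{ℓ²} ≤ M²·∑_{j=1}^N |w_j|²(1 − |z_j|²) (i.e. (z_j) is an interpolating sequence for H² with constant of interpolation at most M). Then for every (b_1,…,b_N) ∈ ℂ^N: ∑_{j=1}^N ∑_{l=1}^N b_j·\overline{b_l}/(1 − \overline{z_j} z_l) ≥ M^{−2}·∑_{j=1}^N |b_j|²/(1 − |z_j|²), the left-hand side being real (it equals ‖∑_j b_j k_{z_j}‖²_{H²}, where k_w(z) = 1/(1 − \overline{w} z)). -/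
open Complex
set_option maxHeartbeats 1000000

noncomputable section

theorem stmt10 (N : ℕ) (z : Fin N → ℂ) (hz : ∀ j, ‖z j‖ < 1)
    (hz_inj : Function.Injective z)
    (M : ℝ) (hM : 0 < M)
    (hInterp : ∀ w : Fin N → ℂ, ∃ a : H2,
      (∀ j, fa a (z j) = w j) ∧
      ‖a‖ ^ 2 ≤ M ^ 2 * ∑ j : Fin N, ‖w j‖ ^ 2 * (1 - ‖z j‖ ^ 2))
    (b : Fin N → ℂ) :
    (∑ j : Fin N, ∑ l : Fin N,
        b j * (starRingEnd ℂ) (b l) / (1 - (starRingEnd ℂ) (z j) * z l)).im = 0 ∧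
    M⁻¹ ^ 2 * ∑ j : Fin N, ‖b j‖ ^ 2 / (1 - ‖z j‖ ^ 2) ≤
      (∑ j : Fin N, ∑ l : Fin N,
        b j * (starRingEnd ℂ) (b l) / (1 - (starRingEnd ℂ) (z j) * z l)).re := by
  have h2 : ((2 : ENNReal).toReal) = ((2 : ℕ) : ℝ) := by norm_num
  have hzz : ∀ j l : Fin N, ‖(starRingEnd ℂ) (z j) * z l‖ < 1 := by
    intro j l
    rw [norm_mul, RCLike.norm_conj]
    nlinarith [hz j, hz l, norm_nonneg (z j), norm_nonneg (z l)]
  -- the sequence c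
  set cf : ℕ → ℂ := fun k => ∑ j : Fin N, b j * ((starRingEnd ℂ) (z j)) ^ k with hcf
  have hmemj : ∀ j : Fin N, Memℓp (fun k : ℕ => b j * ((starRingEnd ℂ) (z j)) ^ k) 2 := by
    intro j
    apply memℓp_gen
    have hs : Summable fun k : ℕ => ‖b j‖ ^ 2 * (‖z j‖ ^ 2) ^ k :=
      (summable_geometric_of_lt_one (by positivity)
        (by nlinarith [hz j, norm_nonneg (z j)])).mul_left _
    apply hs.congr
    intro k
    rw [h2, Real.rpow_natCast]
    rw [norm_mul, norm_pow, RCLike.norm_conj, mul_pow, ← pow_mul, ← pow_mul, Nat.mul_comm 2 k]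
  have hmem : Memℓp cf 2 := Memℓp.finset_sum Finset.univ (fun j _ => hmemj j)
  set c : H2 := (⟨cf, hmem⟩ : lp (fun _ : ℕ => ℂ) 2) with hc
  have hck : ∀ k, c k = cf k := fun _ => rfl
  -- geometric sums per term
  have hterm : ∀ j l : Fin N, ∀ k : ℕ,
      (b j * ((starRingEnd ℂ) (z j)) ^ k) * (starRingEnd ℂ) (b l * ((starRingEnd ℂ) (z l)) ^ k)
        = (b j * (starRingEnd ℂ) (b l)) * ((starRingEnd ℂ) (z j) * z l) ^ k := by
    intro j l k
    simp only [map_mul, map_pow, Complex.conj_conj, mul_pow]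
    ring
  have hsumm : ∀ j l : Fin N, Summable fun k : ℕ =>
      (b j * ((starRingEnd ℂ) (z j)) ^ k) * (starRingEnd ℂ) (b l * ((starRingEnd ℂ) (z l)) ^ k) := by
    intro j l
    apply Summable.congr (((summable_geometric_of_norm_lt_one (hzz j l)).mul_left
      (b j * (starRingEnd ℂ) (b l))))
    intro k; rw [hterm j l k]
  set S : ℂ := ∑ j : Fin N, ∑ l : Fin N,
      b j * (starRingEnd ℂ) (b l) / (1 - (starRingEnd ℂ) (z j) * z l) with hS
  -- S as a tsum
  have hSc : S = ∑' k : ℕ, cf k * (starRingEnd ℂ) (cf k) := by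
    have h1 : ∀ j l : Fin N, b j * (starRingEnd ℂ) (b l) / (1 - (starRingEnd ℂ) (z j) * z l)
        = ∑' k : ℕ, (b j * ((starRingEnd ℂ) (z j)) ^ k)
            * (starRingEnd ℂ) (b l * ((starRingEnd ℂ) (z l)) ^ k) := by
      intro j l
      simp_rw [hterm j l]
      rw [tsum_mul_left, tsum_geometric_of_norm_lt_one (hzz j l), div_eq_mul_inv]
    have step : ∀ j : Fin N, ∑ l : Fin N, ∑' k : ℕ, (b j * ((starRingEnd ℂ) (z j)) ^ k)
            * (starRingEnd ℂ) (b l * ((starRingEnd ℂ) (z l)) ^ k)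
        = ∑' k : ℕ, ∑ l : Fin N, (b j * ((starRingEnd ℂ) (z j)) ^ k)
            * (starRingEnd ℂ) (b l * ((starRingEnd ℂ) (z l)) ^ k) :=
      fun j => (Summable.tsum_finsetSum (fun l _ => hsumm j l)).symm
    rw [hS]
    simp_rw [h1]
    rw [Finset.sum_congr rfl fun j _ => step j]
    rw [← Summable.tsum_finsetSum (fun j _ => summable_sum (fun l _ => hsumm j l))]
    refine tsum_congr fun k => ?_
    rw [hcf, map_sum, Finset.sum_mul_sum]
  have hcf_sq : ∀ k : ℕ, cf k * (starRingEnd ℂ) (cf k) = ((‖cf k‖ ^ 2 : ℝ) : ℂ) := by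
    intro k
    rw [Complex.mul_conj]
    norm_cast
    rw [Complex.normSq_eq_norm_sq]
  have hsummsq : Summable fun k : ℕ => ‖cf k‖ ^ 2 := by
    have := hmem.summable (p := 2) (by norm_num)
    apply this.congr
    intro k
    rw [h2, Real.rpow_natCast]
  have hSreal : S = ((∑' k : ℕ, ‖cf k‖ ^ 2 : ℝ) : ℂ) := by
    rw [hSc]
    simp_rw [hcf_sq]
    exact (Complex.ofReal_tsum _).symm
  have hT' : (∑' k : ℕ, ‖cf k‖ ^ 2 : ℝ) = ‖c‖ ^ 2 := by
    have h1 : (inner ℂ c c : ℂ) = ((∑' k : ℕ, ‖cf k‖ ^ 2 : ℝ) : ℂ) := by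
      rw [lp.inner_eq_tsum]
      simp_rw [RCLike.inner_apply]
      have : ∀ k : ℕ, (starRingEnd ℂ) (c k) * c k = ((‖cf k‖ ^ 2 : ℝ) : ℂ) := by
        intro k; rw [hck, mul_comm, hcf_sq]
      refine (tsum_congr fun k => (mul_comm _ _).trans (this k)).trans ?_
      exact (Complex.ofReal_tsum _).symm
    have h2' : RCLike.re (inner ℂ c c : ℂ) = ‖c‖ ^ 2 := inner_self_eq_norm_sq c
    rw [h1] at h2'
    simp only [RCLike.re_to_complex, Complex.ofReal_re] at h2'
    exact h2'
  constructor
  · rw [hSreal]; simp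
  -- the interpolation argument
  set T : ℝ := ∑ j : Fin N, ‖b j‖ ^ 2 / (1 - ‖z j‖ ^ 2) with hT
  have hzpos : ∀ j, (0:ℝ) < 1 - ‖z j‖ ^ 2 := by
    intro j; nlinarith [hz j, norm_nonneg (z j)]
  have hTnn : 0 ≤ T := Finset.sum_nonneg fun j _ => div_nonneg (by positivity) (hzpos j).le
  set w : Fin N → ℂ := fun j => b j / ((1 - ‖z j‖ ^ 2 : ℝ) : ℂ) with hw
  obtain ⟨a, ha1, ha2⟩ := hInterp w
  have hwT : ∑ j : Fin N, ‖w j‖ ^ 2 * (1 - ‖z j‖ ^ 2) = T := by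
    refine Finset.sum_congr rfl fun j _ => ?_
    rw [hw]
    have : ‖b j / ((1 - ‖z j‖ ^ 2 : ℝ) : ℂ)‖ = ‖b j‖ / (1 - ‖z j‖ ^ 2) := by
      rw [norm_div, Complex.norm_real, Real.norm_of_nonneg (hzpos j).le]
    have hd : (1 - ‖z j‖ ^ 2) ≠ 0 := (hzpos j).ne'
    rw [this, div_pow, pow_two (1 - ‖z j‖ ^ 2), ← div_div, div_mul_cancel₀ _ hd]
  rw [hwT] at ha2
  -- inner product ⟪c, a⟫ = T
  have hfa_summ : ∀ j : Fin N, Summable fun k : ℕ => (a : ℕ → ℂ) k * (z j) ^ k := by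
    intro j
    apply Summable.of_norm_bounded
      ((summable_geometric_of_lt_one (norm_nonneg _) (hz j)).mul_left ‖a‖)
    intro k
    rw [norm_mul, norm_pow]
    exact mul_le_mul_of_nonneg_right (lp.norm_apply_le_norm two_ne_zero a k) (by positivity)
  have hinner : (inner ℂ c a : ℂ) = ((T : ℝ) : ℂ) := by
    rw [lp.inner_eq_tsum]
    simp_rw [RCLike.inner_apply]
    have hterm2 : ∀ k : ℕ, (starRingEnd ℂ) (c k) * a k
        = ∑ j : Fin N, (starRingEnd ℂ) (b j) * (z j) ^ k * a k := by
      intro k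
      rw [hck, hcf, map_sum, Finset.sum_mul]
      refine Finset.sum_congr rfl fun j _ => ?_
      rw [map_mul, map_pow, Complex.conj_conj]
    refine (tsum_congr fun k => (mul_comm _ _).trans (hterm2 k)).trans ?_
    rw [Summable.tsum_finsetSum (fun j _ => by
      have := (hfa_summ j).mul_left ((starRingEnd ℂ) (b j))
      apply this.congr
      intro k; ring)]
    have key : ∀ j : Fin N, ∑' k : ℕ, (starRingEnd ℂ) (b j) * (z j) ^ k * a k
        = (starRingEnd ℂ) (b j) * w j := by
      intro j
      rw [← ha1 j]
      unfold fa
      rw [← tsum_mul_left]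
      refine tsum_congr fun k => ?_
      ring
    calc ∑ j : Fin N, ∑' k : ℕ, (starRingEnd ℂ) (b j) * (z j) ^ k * a k
        = ∑ j : Fin N, (starRingEnd ℂ) (b j) * w j :=
          Finset.sum_congr rfl fun j _ => key j
      _ = ((T : ℝ) : ℂ) := by
          rw [hT, Complex.ofReal_sum]
          refine Finset.sum_congr rfl fun j _ => ?_
          rw [hw]
          rw [← mul_div_assoc, mul_comm ((starRingEnd ℂ) (b j)) (b j), Complex.mul_conj,
            Complex.ofReal_div]
          congr 1
          norm_cast
          rw [Complex.normSq_eq_norm_sq]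
  -- Cauchy-Schwarz
  have hCS : T ≤ ‖c‖ * ‖a‖ := by
    have := norm_inner_le_norm (𝕜 := ℂ) c a
    rw [hinner] at this
    rwa [Complex.norm_real, Real.norm_of_nonneg hTnn] at this
  have hre : S.re = ‖c‖ ^ 2 := by rw [hSreal, hT']; exact Complex.ofReal_re _
  rw [hre]
  rcases eq_or_lt_of_le hTnn with h0 | h0
  · rw [← h0]; simpa using sq_nonneg ‖c‖
  · rw [inv_pow, inv_mul_le_iff₀ (by positivity)]
    nlinarith [mul_le_mul hCS hCS hTnn (by positivity), norm_nonneg a, norm_nonneg c,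
      mul_le_mul_of_nonneg_left ha2 (sq_nonneg ‖c‖)]

end
end

section
/- Let 0 < λ < 1 and set z_j := (1 − λ^j)/(1 + λ^j) for integers j ≥ 1. Then for every j ≥ 1 and every finite set S of positive integers with j ∉ S: ∏_{k ∈ S} |(z_j − z_k)/(1 − z_j·z_k)| ≥ exp(−(π²/2)/(1 − λ)). (Consequently the separation constant δ(Z(λ)) = inf_j ∏_{k ≠ j} |(z_j − z_k)/(1 − z_j z_k)| of the sequence Z(λ) = (z_j)_{j≥1} satisfies δ(Z(λ)) ≥ e^{−(π²/2)/(1−λ)}.) -/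
open Real Finset

/-- Basel problem for odd integers: `∑ 1/(2k+1)^2 = π²/8`. -/
lemma oddBasel : HasSum (fun k : ℕ => (1 : ℝ) / (2 * (k : ℝ) + 1) ^ 2) (Real.pi ^ 2 / 8) := by
  have hb := hasSum_zeta_two
  have heven : HasSum (fun k : ℕ => (1 : ℝ) / ((2 * k : ℕ) : ℝ) ^ 2) (Real.pi ^ 2 / 24) := by
    have h4 := hb.mul_left (1 / 4 : ℝ)
    have : (fun k : ℕ => (1 : ℝ) / ((2 * k : ℕ) : ℝ) ^ 2) =
        fun k : ℕ => (1 / 4 : ℝ) * (1 / (k : ℝ) ^ 2) := by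
      funext k
      push_cast
      rw [mul_pow, one_div, one_div, one_div, mul_inv, ← one_div]
      norm_num
    rw [this]
    rw [show Real.pi ^ 2 / 24 = 1 / 4 * (Real.pi ^ 2 / 6) by ring]
    exact h4
  have hsum1 : Summable (fun k : ℕ => (1 : ℝ) / ((k : ℝ) + 1) ^ 2) := by
    have h2 := hb.summable.comp_injective (add_left_injective 1)
    refine h2.congr fun k => ?_
    simp only [Function.comp_apply]
    push_cast
    ring
  have hodds : Summable (fun k : ℕ => (1 : ℝ) / (2 * (k : ℝ) + 1) ^ 2) := by
    apply Summable.of_nonneg_of_le (fun k => by positivity) _ hsum1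
    intro k
    apply one_div_le_one_div_of_le (by positivity)
    have : (k : ℝ) + 1 ≤ 2 * k + 1 := by
      have : (0:ℝ) ≤ (k : ℝ) := Nat.cast_nonneg k
      linarith
    exact pow_le_pow_left₀ (by positivity) this 2
  obtain ⟨t, ht⟩ := hodds
  have ho' : HasSum (fun k : ℕ => (1 : ℝ) / ((2 * k + 1 : ℕ) : ℝ) ^ 2) t := by
    convert ht using 2 with k
    push_cast
    ring
  have htotal : HasSum (fun n : ℕ => (1 : ℝ) / (n : ℝ) ^ 2) (Real.pi ^ 2 / 24 + t) :=
    HasSum.even_add_odd heven ho'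
  have : Real.pi ^ 2 / 24 + t = Real.pi ^ 2 / 6 := htotal.unique hb
  have : t = Real.pi ^ 2 / 8 := by linarith
  rwa [this] at ht

/-- A finite sum of `y^m` over positive indices is at most `y / (1-y)`. -/
lemma sum_pow_le {y : ℝ} (hy0 : 0 ≤ y) (hy1 : y < 1) (T : Finset ℕ) (hT : ∀ m ∈ T, 1 ≤ m) :
    ∑ m ∈ T, y ^ m ≤ y / (1 - y) := by
  have hsum : Summable (fun m : ℕ => y ^ (m + 1)) := by
    simpa [pow_succ] using (summable_geometric_of_lt_one hy0 hy1).mul_right y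
  have h1 : ∑ m ∈ T, y ^ m = ∑ m ∈ T.image (· - 1), y ^ (m + 1) := by
    rw [Finset.sum_image]
    · apply Finset.sum_congr rfl
      intro m hm
      rw [Nat.sub_add_cancel (hT m hm)]
    · intro a ha b hb hab
      have := hT a ha; have := hT b hb; simp only at hab; omega
  rw [h1]
  calc ∑ m ∈ T.image (· - 1), y ^ (m + 1) ≤ ∑' m : ℕ, y ^ (m + 1) :=
        Summable.sum_le_tsum _ (fun i _ => by positivity) hsum
    _ = y / (1 - y) := by
        rw [tsum_congr (fun m => by rw [pow_succ]), tsum_mul_right,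
          tsum_geometric_of_lt_one hy0 hy1, inv_mul_eq_div]

/-- Key estimate: `∑_{m ∈ T} log((1+l^m)/(1-l^m)) ≤ π²/(4(1-l))`. -/
lemma sumG_le {l : ℝ} (hl₀ : 0 < l) (hl₁ : l < 1) (T : Finset ℕ) (hT : ∀ m ∈ T, 1 ≤ m) :
    ∑ m ∈ T, (Real.log (1 + l ^ m) - Real.log (1 - l ^ m)) ≤ Real.pi ^ 2 / (4 * (1 - l)) := by
  have h1l : (0 : ℝ) < 1 - l := by linarith
  -- the series for each term
  have hx : ∀ m ∈ T, 0 < l ^ m ∧ l ^ m < 1 := by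
    intro m hm
    have h1m := hT m hm
    exact ⟨pow_pos hl₀ m, pow_lt_one₀ hl₀.le hl₁ (by omega)⟩
  set F : ℕ → ℕ → ℝ := fun m n =>
    ((l ^ m) ^ (n + 1) - (-(l ^ m)) ^ (n + 1)) / ((n : ℝ) + 1) with hF
  have hs : ∀ m ∈ T, HasSum (F m) (Real.log (1 + l ^ m) - Real.log (1 - l ^ m)) := by
    intro m hm
    obtain ⟨hx0, hx1⟩ := hx m hm
    set x := l ^ m
    have habs : |x| < 1 := by rw [abs_of_pos hx0]; exact hx1
    have habs' : |(-x)| < 1 := by rwa [abs_neg]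
    have A := hasSum_pow_div_log_of_abs_lt_one habs
    have B := hasSum_pow_div_log_of_abs_lt_one habs'
    have C := A.sub B
    have : -Real.log (1 - x) - -Real.log (1 - -x) =
        Real.log (1 + x) - Real.log (1 - x) := by
      rw [sub_neg_eq_add]; ring
    rw [this] at C
    have hC : F m = fun n : ℕ => x ^ (n + 1) / ((n : ℝ) + 1) - (-x) ^ (n + 1) / ((n : ℝ) + 1) := by
      funext n
      simp only [hF]
      push_cast
      rw [sub_div]
    rw [hC]
    exact C
  -- swap sum and tsum
  have hswap : ∑ m ∈ T, (Real.log (1 + l ^ m) - Real.log (1 - l ^ m)) =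
      ∑' n : ℕ, ∑ m ∈ T, F m n := by
    rw [Summable.tsum_finsetSum (fun m hm => (hs m hm).summable)]
    exact Finset.sum_congr rfl fun m hm => ((hs m hm).tsum_eq).symm
  rw [hswap]
  -- the majorant
  set b : ℕ → ℝ := fun n =>
    if Even n then 2 / (((n : ℝ) + 1) ^ 2 * (1 - l)) else 0 with hb
  have hbsum : HasSum b (Real.pi ^ 2 / (4 * (1 - l))) := by
    have hne := h1l.ne'
    have he : HasSum (fun k : ℕ => b (2 * k)) ((2 / (1 - l)) * (Real.pi ^ 2 / 8)) := by
      have hodd := oddBasel.mul_left (2 / (1 - l))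
      have hfun : (fun k : ℕ => b (2 * k)) =
          fun k : ℕ => (2 / (1 - l)) * ((1 : ℝ) / (2 * (k : ℝ) + 1) ^ 2) := by
        funext k
        simp only [hb]
        rw [if_pos (even_two_mul k)]
        push_cast
        have hk : ((2 : ℝ) * k + 1) ^ 2 ≠ 0 := by positivity
        field_simp
      rw [hfun]
      exact hodd
    have ho : HasSum (fun k : ℕ => b (2 * k + 1)) 0 := by
      have : (fun k : ℕ => b (2 * k + 1)) = fun _ => (0 : ℝ) := by
        funext k
        rw [hb]
        simp [Nat.even_add_one, parity_simps]
      rw [this]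
      exact hasSum_zero
    have := he.even_add_odd ho
    convert this using 1
    field_simp
    ring
  -- pointwise bound
  have hpt : ∀ n : ℕ, ∑ m ∈ T, F m n ≤ b n := by
    intro n
    rcases Nat.even_or_odd n with hn | hn
    · -- n even, n+1 odd
      have hodd : Odd (n + 1) := Even.add_one hn
      have hFeq : ∀ m ∈ T, F m n = 2 / ((n : ℝ) + 1) * (l ^ (n + 1)) ^ m := by
        intro m hm
        simp only [hF]
        rw [hodd.neg_pow]
        rw [← pow_mul, mul_comm m (n + 1), pow_mul]
        ring
      rw [Finset.sum_congr rfl hFeq, ← Finset.mul_sum]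
      have hy0 : (0 : ℝ) ≤ l ^ (n + 1) := by positivity
      have hy1 : l ^ (n + 1) < 1 := pow_lt_one₀ hl₀.le hl₁ (Nat.succ_ne_zero n)
      have hgeo := sum_pow_le hy0 hy1 T hT
      have hfrac : l ^ (n + 1) / (1 - l ^ (n + 1)) ≤ 1 / (((n : ℝ) + 1) * (1 - l)) := by
        have hgs : 1 - l ^ (n + 1) = (1 - l) * ∑ i ∈ Finset.range (n + 1), l ^ i := by
          have := geom_sum_mul l (n + 1)
          nlinarith [this]
        have hlow : ((n : ℝ) + 1) * l ^ (n + 1) ≤ ∑ i ∈ Finset.range (n + 1), l ^ i := by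
          have : ∀ i ∈ Finset.range (n + 1), l ^ (n + 1) ≤ l ^ i := by
            intro i hi
            exact pow_le_pow_of_le_one hl₀.le hl₁.le (by
              simp only [Finset.mem_range] at hi; omega)
          calc ((n : ℝ) + 1) * l ^ (n + 1)
              = ∑ _i ∈ Finset.range (n + 1), l ^ (n + 1) := by
                rw [Finset.sum_const, Finset.card_range]; push_cast; ring
            _ ≤ ∑ i ∈ Finset.range (n + 1), l ^ i := Finset.sum_le_sum this
        rw [div_le_div_iff₀ (by nlinarith [pow_pos hl₀ (n+1)]) (by positivity)]
        have hn1 : (0 : ℝ) < (n : ℝ) + 1 := by positivity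
        nlinarith [pow_pos hl₀ (n + 1)]
      have h2n : (0 : ℝ) < 2 / ((n : ℝ) + 1) := by positivity
      calc 2 / ((n : ℝ) + 1) * ∑ m ∈ T, (l ^ (n + 1)) ^ m
          ≤ 2 / ((n : ℝ) + 1) * (l ^ (n + 1) / (1 - l ^ (n + 1))) := by
            exact mul_le_mul_of_nonneg_left hgeo h2n.le
        _ ≤ 2 / ((n : ℝ) + 1) * (1 / (((n : ℝ) + 1) * (1 - l))) :=
            mul_le_mul_of_nonneg_left hfrac h2n.le
        _ = b n := by
            rw [hb]; simp only [if_pos hn]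
            field_simp
    · -- n odd, n+1 even
      have heven : Even (n + 1) := Odd.add_one hn
      have hFeq : ∀ m ∈ T, F m n = 0 := by
        intro m hm
        simp only [hF]
        rw [heven.neg_pow, sub_self, zero_div]
      rw [Finset.sum_congr rfl hFeq, Finset.sum_const, smul_zero, hb]
      simp [Nat.not_even_iff_odd.mpr hn]
  exact le_of_le_of_eq
    (Summable.tsum_le_tsum hpt (summable_sum fun m hm => (hs m hm).summable) hbsum.summable)
    hbsum.tsum_eq

theorem stmt18 (l : ℝ) (hl₀ : 0 < l) (hl₁ : l < 1)
    (z : ℕ → ℝ) (hz : ∀ j : ℕ, z j = (1 - l ^ j) / (1 + l ^ j)) :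
    ∀ j : ℕ, 1 ≤ j → ∀ S : Finset ℕ, (∀ k ∈ S, 1 ≤ k) → j ∉ S →
      Real.exp (-(Real.pi ^ 2 / 2) / (1 - l)) ≤
        ∏ k ∈ S, |(z j - z k) / (1 - z j * z k)| := by
  have h1l : (0 : ℝ) < 1 - l := by linarith
  -- basic facts about z
  have hzpos : ∀ i : ℕ, 0 ≤ z i ∧ z i < 1 := by
    intro i
    rw [hz i]
    have hpi : (0 : ℝ) < l ^ i := pow_pos hl₀ i
    have hle : l ^ i ≤ 1 := pow_le_one₀ hl₀.le hl₁.le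
    constructor
    · apply div_nonneg (by linarith) (by linarith)
    · rw [div_lt_one (by linarith)]; linarith
  have hden : ∀ i k : ℕ, 0 < 1 - z i * z k := by
    intro i k
    obtain ⟨h1, h2⟩ := hzpos i
    obtain ⟨h3, h4⟩ := hzpos k
    nlinarith
  -- the key formula: ratio for j < k
  have hratio : ∀ a d : ℕ, 1 ≤ d →
      |(z a - z (a + d)) / (1 - z a * z (a + d))| = (1 - l ^ d) / (1 + l ^ d) := by
    intro a d hd
    have hA : (0 : ℝ) < l ^ a := pow_pos hl₀ a
    have hB : (0 : ℝ) < l ^ (a + d) := pow_pos hl₀ (a + d)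
    have h1A : (0 : ℝ) < 1 + l ^ a := by linarith
    have h1B : (0 : ℝ) < 1 + l ^ (a + d) := by linarith
    have e1 : z a - z (a + d) =
        2 * (l ^ (a + d) - l ^ a) / ((1 + l ^ a) * (1 + l ^ (a + d))) := by
      rw [hz a, hz (a + d)]
      field_simp
      ring
    have e2 : 1 - z a * z (a + d) =
        2 * (l ^ a + l ^ (a + d)) / ((1 + l ^ a) * (1 + l ^ (a + d))) := by
      rw [hz a, hz (a + d)]
      field_simp
      ring
    have hAB : (0 : ℝ) < l ^ a + l ^ (a + d) := by linarith
    have e3 : (z a - z (a + d)) / (1 - z a * z (a + d)) =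
        (l ^ (a + d) - l ^ a) / (l ^ a + l ^ (a + d)) := by
      rw [e1, e2, div_div_div_cancel_right₀]
      rw [mul_div_mul_left _ _ (two_ne_zero)]
      · positivity
    rw [e3, abs_div, abs_of_pos hAB]
    have hBA : l ^ (a + d) ≤ l ^ a := by
      apply pow_le_pow_of_le_one hl₀.le hl₁.le
      omega
    rw [abs_of_nonpos (by linarith)]
    have hld : l ^ (a + d) = l ^ a * l ^ d := pow_add l a d
    rw [neg_sub, hld]
    rw [show l ^ a - l ^ a * l ^ d = l ^ a * (1 - l ^ d) by ring,
      show l ^ a + l ^ a * l ^ d = l ^ a * (1 + l ^ d) by ring,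
      mul_div_mul_left _ _ (ne_of_gt hA)]
  -- the factor formula in general
  have hfac : ∀ a k : ℕ, a ≠ k →
      |(z a - z k) / (1 - z a * z k)| =
        (1 - l ^ (Nat.dist a k)) / (1 + l ^ (Nat.dist a k)) := by
    intro a k hne
    have hratio' : ∀ a k : ℕ, a < k →
        |(z a - z k) / (1 - z a * z k)| = (1 - l ^ (k - a)) / (1 + l ^ (k - a)) := by
      intro a k h
      have := hratio a (k - a) (by omega)
      rwa [show a + (k - a) = k from by omega] at this
    rcases Nat.lt_or_ge a k with h | h
    · rw [hratio' a k h, Nat.dist_eq_sub_of_le h.le]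
    · have hka : k < a := by omega
      have habs : |(z a - z k) / (1 - z a * z k)| =
          |(z k - z a) / (1 - z k * z a)| := by
        rw [abs_div, abs_div, abs_sub_comm, mul_comm]
      rw [habs, hratio' k a hka, Nat.dist_eq_sub_of_le_right hka.le]
  intro j hj S hS hjS
  -- f d := (1-l^d)/(1+l^d)
  set f : ℕ → ℝ := fun d => (1 - l ^ d) / (1 + l ^ d) with hf
  have hprod : ∏ k ∈ S, |(z j - z k) / (1 - z j * z k)| = ∏ k ∈ S, f (Nat.dist j k) := by
    apply Finset.prod_congr rfl
    intro k hk
    exact hfac j k (fun h => hjS (h ▸ hk))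
  rw [hprod]
  have hfpos : ∀ d : ℕ, 1 ≤ d → 0 < f d := by
    intro d hd
    rw [hf]
    have h1 : l ^ d < 1 := pow_lt_one₀ hl₀.le hl₁ (by omega)
    have h2 : (0 : ℝ) < l ^ d := pow_pos hl₀ d
    apply div_pos <;> linarith
  have hdistpos : ∀ k ∈ S, 1 ≤ Nat.dist j k := by
    intro k hk
    have : j ≠ k := fun h => hjS (h ▸ hk)
    exact Nat.dist_pos_of_ne this
  have hPpos : 0 < ∏ k ∈ S, f (Nat.dist j k) :=
    Finset.prod_pos fun k hk => hfpos _ (hdistpos k hk)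
  rw [← Real.exp_log hPpos]
  apply Real.exp_le_exp.mpr
  rw [Real.log_prod (fun k hk => (hfpos _ (hdistpos k hk)).ne')]
  -- log (f d) = -(log(1+l^d) - log(1-l^d))
  have hlogf : ∀ k ∈ S, Real.log (f (Nat.dist j k)) =
      -(Real.log (1 + l ^ (Nat.dist j k)) - Real.log (1 - l ^ (Nat.dist j k))) := by
    intro k hk
    have hd := hdistpos k hk
    have h1 : l ^ (Nat.dist j k) < 1 := pow_lt_one₀ hl₀.le hl₁ (by omega)
    have h2 : (0 : ℝ) < l ^ (Nat.dist j k) := pow_pos hl₀ _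
    rw [hf]
    rw [Real.log_div (by linarith) (by positivity)]
    ring
  rw [Finset.sum_congr rfl hlogf, Finset.sum_neg_distrib]
  rw [neg_div, neg_le_neg_iff]
  -- now bound the sum of g over S
  set g : ℕ → ℝ := fun d => Real.log (1 + l ^ d) - Real.log (1 - l ^ d) with hg
  -- split into k < j and k > j
  rw [← Finset.sum_filter_add_sum_filter_not S (· < j)]
  have hbound : ∀ (S' : Finset ℕ), (∀ k ∈ S', k ≠ j) →
      (Set.InjOn (Nat.dist j) S') →
      ∑ k ∈ S', g (Nat.dist j k) ≤ Real.pi ^ 2 / (4 * (1 - l)) := by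
    intro S' hne hinj
    have : ∑ k ∈ S', g (Nat.dist j k) = ∑ m ∈ S'.image (Nat.dist j), g m := by
      rw [Finset.sum_image]
      intro a ha b hb hab
      exact hinj (by simpa using ha) (by simpa using hb) hab
    rw [this]
    apply sumG_le hl₀ hl₁
    intro m hm
    simp only [Finset.mem_image] at hm
    obtain ⟨k, hk, rfl⟩ := hm
    exact Nat.dist_pos_of_ne (Ne.symm (hne k hk))
  have hb1 : ∑ k ∈ S.filter (· < j), g (Nat.dist j k) ≤ Real.pi ^ 2 / (4 * (1 - l)) := by
    apply hbound
    · intro k hk; simp only [Finset.mem_filter] at hk; omega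
    · intro a ha b hb hab
      simp only [Finset.coe_filter, Set.mem_setOf_eq] at ha hb
      rcases Nat.lt_or_ge a j with h1 | h1 <;> rcases Nat.lt_or_ge b j with h2 | h2 <;>
        [skip; skip; skip; skip] <;>
        first
          | (rw [Nat.dist_eq_sub_of_le_right h1.le, Nat.dist_eq_sub_of_le_right h2.le] at hab; omega)
          | (rw [Nat.dist_eq_sub_of_le_right h1.le, Nat.dist_eq_sub_of_le h2] at hab; omega)
          | (rw [Nat.dist_eq_sub_of_le h1, Nat.dist_eq_sub_of_le_right h2.le] at hab; omega)
          | (rw [Nat.dist_eq_sub_of_le h1, Nat.dist_eq_sub_of_le h2] at hab; omega)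
  have hb2 : ∑ k ∈ S.filter (¬ · < j), g (Nat.dist j k) ≤ Real.pi ^ 2 / (4 * (1 - l)) := by
    apply hbound
    · intro k hk; simp only [Finset.mem_filter] at hk
      exact fun h => hjS (h ▸ hk.1)
    · intro a ha b hb hab
      simp only [Finset.coe_filter, Set.mem_setOf_eq] at ha hb
      rcases Nat.lt_or_ge a j with h1 | h1 <;> rcases Nat.lt_or_ge b j with h2 | h2 <;>
        [skip; skip; skip; skip] <;>
        first
          | (rw [Nat.dist_eq_sub_of_le_right h1.le, Nat.dist_eq_sub_of_le_right h2.le] at hab; omega)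
          | (rw [Nat.dist_eq_sub_of_le_right h1.le, Nat.dist_eq_sub_of_le h2] at hab; omega)
          | (rw [Nat.dist_eq_sub_of_le h1, Nat.dist_eq_sub_of_le_right h2.le] at hab; omega)
          | (rw [Nat.dist_eq_sub_of_le h1, Nat.dist_eq_sub_of_le h2] at hab; omega)
  have : Real.pi ^ 2 / 2 / (1 - l) =
      Real.pi ^ 2 / (4 * (1 - l)) + Real.pi ^ 2 / (4 * (1 - l)) := by
    field_simp
    ring
  rw [this]
  exact add_le_add hb1 hb2
end

section
/- Let x₀ > 0 and let η, ω : [x₀,∞) → (0,∞) be differentiable functions such that η is positive and nondecreasing with x·η'(x)/η(x) → 0 as x → ∞, ω is nondecreasing (ω'(x) ≥ 0), x/ω(x) → ∞ as x → ∞, and η(x/ω(x)) = ω(x) for all x ≥ x₀. Then x·ω'(x)/ω(x) → 0 as x → ∞. -/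
open Filter Set

lemma aux_deriv_nonneg {x₀ : ℝ} {η : ℝ → ℝ} (hη_mono : MonotoneOn η (Set.Ici x₀))
    {u : ℝ} (hu : x₀ < u) (hd : DifferentiableAt ℝ η u) : 0 ≤ deriv η u := by
  have h := hd.hasDerivAt
  rw [hasDerivAt_iff_tendsto_slope] at h
  have h' : Tendsto (slope η u) (nhdsWithin u (Set.Ioi u)) (nhds (deriv η u)) :=
    h.mono_left (nhdsWithin_mono _ (by intro v hv; exact ne_of_gt hv))
  refine ge_of_tendsto h' ?_
  filter_upwards [self_mem_nhdsWithin] with v hv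
  have hvu : u < v := hv
  have : η u ≤ η v := hη_mono (le_of_lt hu) (le_of_lt (hu.trans hvu)) hvu.le
  have hpos : 0 < v - u := by linarith
  rw [slope_def_field]
  exact div_nonneg (by linarith) hpos.le

theorem stmt19 (x₀ : ℝ) (hx₀ : 0 < x₀) (η ω : ℝ → ℝ)
    (hη_diff : ∀ x : ℝ, x₀ ≤ x → DifferentiableAt ℝ η x)
    (hω_diff : ∀ x : ℝ, x₀ ≤ x → DifferentiableAt ℝ ω x)
    (hη_pos : ∀ x : ℝ, x₀ ≤ x → 0 < η x)
    (hω_pos : ∀ x : ℝ, x₀ ≤ x → 0 < ω x)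
    (hη_mono : MonotoneOn η (Set.Ici x₀))
    (hη_small : Tendsto (fun x => x * deriv η x / η x) atTop (nhds 0))
    (hω_mono : ∀ x : ℝ, x₀ ≤ x → 0 ≤ deriv ω x)
    (hquot : Tendsto (fun x => x / ω x) atTop atTop)
    (heq : ∀ x : ℝ, x₀ ≤ x → η (x / ω x) = ω x) :
    Tendsto (fun x => x * deriv ω x / ω x) atTop (nhds 0) := by
  set A : ℝ → ℝ := fun x => (x / ω x) * deriv η (x / ω x) / η (x / ω x) with hA
  have hAtend : Tendsto A atTop (nhds 0) := hη_small.comp hquot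
  -- eventual facts
  have h1 : ∀ᶠ x in atTop, x₀ < x := eventually_gt_atTop x₀
  have h2 : ∀ᶠ x in atTop, x₀ < x / ω x := hquot.eventually_gt_atTop x₀
  -- eventual identity: x * ω'/ω = A/(1+A), and A ≥ 0
  have key : ∀ᶠ x in atTop,
      x * deriv ω x / ω x = A x / (1 + A x) ∧ 0 ≤ A x := by
    filter_upwards [h1, h2] with x hx hu
    have hxle : x₀ ≤ x := hx.le
    have hw : 0 < ω x := hω_pos x hxle
    set u := x / ω x with hu_def
    have hule : x₀ ≤ u := hu.le
    have hηu : η u = ω x := heq x hxle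
    set D := deriv η u with hD
    have hDnn : 0 ≤ D := aux_deriv_nonneg hη_mono hu (hη_diff u hule)
    -- derivative of g y = y / ω y at x
    have hg : HasDerivAt (fun y => y / ω y)
        ((1 * ω x - x * deriv ω x) / (ω x) ^ 2) x :=
      (hasDerivAt_id x).div (hω_diff x hxle).hasDerivAt (ne_of_gt hw)
    have hcomp : HasDerivAt (fun y => η (y / ω y))
        (D * ((1 * ω x - x * deriv ω x) / (ω x) ^ 2)) x :=
      (hη_diff u hule).hasDerivAt.comp x hg
    have heq' : (fun y => η (y / ω y)) =ᶠ[nhds x] ω := by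
      filter_upwards [Ioi_mem_nhds hx] with y hy
      exact heq y (le_of_lt hy)
    have hω' : HasDerivAt ω (D * ((1 * ω x - x * deriv ω x) / (ω x) ^ 2)) x :=
      hcomp.congr_of_eventuallyEq heq'.symm
    have hrel : deriv ω x = D * ((1 * ω x - x * deriv ω x) / (ω x) ^ 2) := hω'.deriv
    have hwne : ω x ≠ 0 := ne_of_gt hw
    -- from hrel: deriv ω x * ((ω x)^2 + D * x) = D * ω x
    have hrel2 : deriv ω x * ((ω x) ^ 2 + D * x) = D * ω x := by
      field_simp at hrel
      nlinarith [hrel]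
    have hAx : A x = x * D / (ω x) ^ 2 := by
      rw [hA]
      simp only [← hu_def, hηu, ← hD]
      rw [hu_def, div_mul_eq_mul_div, div_div, sq]
    have hxpos : 0 < x := hx₀.trans hx
    have hAnn : 0 ≤ A x := by
      rw [hAx]; positivity
    constructor
    · rw [hAx]
      have hden : (0:ℝ) < (ω x) ^ 2 + x * D := by positivity
      have e1 : 1 + x * D / ω x ^ 2 = (ω x ^ 2 + x * D) / ω x ^ 2 := by
        field_simp
      have e2 : x * D / ω x ^ 2 / ((ω x ^ 2 + x * D) / ω x ^ 2)
          = x * D / (ω x ^ 2 + x * D) := by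
        rw [div_div_div_eq, mul_comm (x * D) (ω x ^ 2)]
        exact mul_div_mul_left _ _ (by positivity)
      rw [e1, e2, div_eq_div_iff hwne (ne_of_gt hden)]
      linear_combination x * hrel2
    · exact hAnn
  -- conclude
  have hlim : Tendsto (fun x => A x / (1 + A x)) atTop (nhds 0) := by
    have h1A : Tendsto (fun x => 1 + A x) atTop (nhds 1) := by
      simpa using (tendsto_const_nhds.add hAtend : Tendsto (fun x => (1:ℝ) + A x) atTop (nhds (1 + 0)))
    have h := hAtend.div h1A one_ne_zero
    rw [zero_div] at h
    exact h
  refine hlim.congr' ?_ |>.mono_right le_rfl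
  filter_upwards [key] with x hx using hx.1.symm
end
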